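/- Let W₁,...,W_m be i.i.d. Bernoulli(a·log n/n) and Z₁,...,Z_m be i.i.d. Bernoulli(b·log n/n), all independent, with a > b > 0 and m = δn/2 for δ ∈ (0,1). Then P(Σ_{i=1}^m (Wᵢ - Zᵢ) ≤ 0) ≤ exp(-(δ/2)·(√a - √b)²·log n) = n^{-δ(√a-√b)²/2}. -/

import Mathlib

set_option maxHeartbeats 1000000


open MeasureTheory ProbabilityTheory Real

/-- mgf of a Bernoulli(p) random variable. -/
lemma bernoulli_mgf {Ω : Type*} [MeasurableSpace Ω] (μ : Measure Ω) [IsProbabilityMeasure μ]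
    (X : Ω → ℝ) (p t : ℝ) (hmeas : Measurable X) (hval : ∀ ω, X ω = 0 ∨ X ω = 1)
    (hp : μ {ω | X ω = 1} = ENNReal.ofReal p) (hp0 : 0 ≤ p) :
    mgf X μ t = 1 + p * (Real.exp t - 1) := by
  have hA : MeasurableSet {ω | X ω = 1} := hmeas (measurableSet_singleton 1)
  have hInd : X = Set.indicator {ω | X ω = 1} (fun _ => (1:ℝ)) := by
    funext ω
    rcases hval ω with h | h <;> simp [Set.indicator, h]
  have hXint : Integrable X μ := by
    refine ⟨hmeas.aestronglyMeasurable, HasFiniteIntegral.of_bounded (C := 1) ?_⟩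
    filter_upwards with ω
    rcases hval ω with h | h <;> simp [h]
  have hEX : ∫ ω, X ω ∂μ = p := by
    conv_lhs => rw [hInd]
    rw [integral_indicator_const (1:ℝ) hA, measureReal_def, hp, smul_eq_mul, mul_one,
      ENNReal.toReal_ofReal hp0]
  have hfun : (fun ω => Real.exp (t * X ω)) = fun ω => 1 + (Real.exp t - 1) * X ω := by
    funext ω
    rcases hval ω with h | h <;> simp [h]
  rw [mgf, hfun, integral_add (integrable_const 1) (hXint.const_mul _),
    integral_const, integral_const_mul, hEX]
  simp [mul_comm]

/-- Error-rate bound for the simple voting estimator: if `W i` are i.i.d.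
Bernoulli(a log n/n) and `Z i` are i.i.d. Bernoulli(b log n/n), all independent,
with `a > b > 0` and `m = δn/2`, then
`P(Σ (Wᵢ - Zᵢ) ≤ 0) ≤ n^{-δ(√a-√b)²/2}`. -/
theorem simple_voting_error_bound
    (n m : ℕ) (a b δ : ℝ) (hb : 0 < b) (hab : b < a) (hδ : δ ∈ Set.Ioo (0:ℝ) 1)
    (hm : (m : ℝ) = δ * n / 2) (hn : 2 ≤ n)
    (hp1 : a * Real.log n / n ≤ 1)
    {Ω : Type*} [MeasurableSpace Ω] (μ : Measure Ω) [IsProbabilityMeasure μ]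
    (W Z : Fin m → Ω → ℝ)
    (hWmeas : ∀ i, Measurable (W i)) (hZmeas : ∀ i, Measurable (Z i))
    (hWval : ∀ i, ∀ ω, W i ω = 0 ∨ W i ω = 1)
    (hZval : ∀ i, ∀ ω, Z i ω = 0 ∨ Z i ω = 1)
    (hWp : ∀ i, μ {ω | W i ω = 1} = ENNReal.ofReal (a * Real.log n / n))
    (hZq : ∀ i, μ {ω | Z i ω = 1} = ENNReal.ofReal (b * Real.log n / n))
    (hindep : iIndepFun
      (Sum.elim W Z) μ) :
    (μ {ω | ∑ i, (W i ω - Z i ω) ≤ 0}).toReal ≤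
      Real.exp (-(δ / 2) * (Real.sqrt a - Real.sqrt b)^2 * Real.log n) := by
  have ha : 0 < a := hb.trans hab
  set ea := Real.sqrt a with hea
  set eb := Real.sqrt b with heb
  have hea0 : 0 < ea := Real.sqrt_pos.mpr ha
  have heb0 : 0 < eb := Real.sqrt_pos.mpr hb
  have hea2 : ea ^ 2 = a := Real.sq_sqrt ha.le
  have heb2 : eb ^ 2 = b := Real.sq_sqrt hb.le
  have heab : eb ≤ ea := Real.sqrt_le_sqrt hab.le
  have hn0 : (0:ℝ) < n := by positivity
  have hL : 0 ≤ Real.log n := Real.log_nonneg (by exact_mod_cast Nat.one_le_of_lt hn)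
  set p := a * Real.log n / n with hpdef
  set q := b * Real.log n / n with hqdef
  have hp0 : 0 ≤ p := by positivity
  have hq0 : 0 ≤ q := by positivity
  -- the tilt
  set t := Real.log (eb / ea) with ht
  have ht0 : t ≤ 0 := Real.log_nonpos (by positivity) ((div_le_one hea0).mpr heab)
  have het : Real.exp t = eb / ea := Real.exp_log (by positivity)
  have hemt : Real.exp (-t) = ea / eb := by
    rw [Real.exp_neg, het, inv_div]
  -- the summands
  set Y : (Fin m ⊕ Fin m) → Ω → ℝ := Sum.elim W (fun i => -(Z i)) with hY
  have hYmeas : ∀ j, Measurable (Y j) := by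
    rintro (i | i)
    · exact hWmeas i
    · exact (hZmeas i).neg
  have hYindep : iIndepFun Y μ := by
    have := hindep.comp (Sum.elim (fun _ : Fin m => (id : ℝ → ℝ))
      (fun _ : Fin m => (fun x : ℝ => -x)))
      (by rintro (i | i); exacts [measurable_id, measurable_neg])
    convert this using 1
    funext j
    cases j <;> rfl
  set S : Ω → ℝ := fun ω => ∑ j, Y j ω with hSdef
  have hSfun : (∑ j ∈ Finset.univ, Y j) = S := by
    funext ω
    rw [Finset.sum_apply]
  have hSY : ∀ ω, S ω = ∑ i, (W i ω - Z i ω) := by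
    intro ω
    simp only [hSdef, Fintype.sum_sum_type, hY, Sum.elim_inl, Sum.elim_inr,
      Pi.neg_apply, sub_eq_add_neg, Finset.sum_add_distrib]
  -- integrability of the tilted variables
  have hYbound : ∀ j ω, |Y j ω| ≤ 1 := by
    rintro (i | i) ω
    · rcases hWval i ω with h | h <;> simp [hY, h]
    · rcases hZval i ω with h | h <;> simp [hY, h]
  have hSmeas : Measurable S := Finset.measurable_sum _ fun j _ => hYmeas j
  have hint : Integrable (fun ω => Real.exp (t * S ω)) μ := by
    refine ⟨((hSmeas.const_mul t).exp).aestronglyMeasurable,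
      HasFiniteIntegral.of_bounded (C := Real.exp (|t| * (Fintype.card (Fin m ⊕ Fin m)))) ?_⟩
    filter_upwards with ω
    rw [Real.norm_eq_abs, abs_exp]
    apply Real.exp_le_exp.mpr
    calc t * S ω ≤ |t * S ω| := le_abs_self _
      _ = |t| * |S ω| := abs_mul _ _
      _ ≤ |t| * (Fintype.card (Fin m ⊕ Fin m)) := by
          apply mul_le_mul_of_nonneg_left _ (abs_nonneg t)
          calc |∑ j, Y j ω| ≤ ∑ j, |Y j ω| := Finset.abs_sum_le_sum_abs _ _
            _ ≤ ∑ _j : Fin m ⊕ Fin m, (1:ℝ) := Finset.sum_le_sum fun j _ => hYbound j ω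
            _ = Fintype.card (Fin m ⊕ Fin m) := by simp
  -- Chernoff
  have hset : {ω | ∑ i, (W i ω - Z i ω) ≤ 0} = {ω | S ω ≤ 0} := by
    ext ω; rw [Set.mem_setOf_eq, Set.mem_setOf_eq, hSY ω]
  rw [hset]
  have hchern := measure_le_le_exp_mul_mgf (μ := μ) (X := S) 0 ht0 hint
  rw [mul_zero, Real.exp_zero, one_mul] at hchern
  refine hchern.trans ?_
  -- compute the mgf
  rw [← hSfun, hYindep.mgf_sum hYmeas]
  -- bound each factor
  set r : Fin m ⊕ Fin m → ℝ := Sum.elim (fun _ => p * (Real.exp t - 1))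
    (fun _ => q * (Real.exp (-t) - 1)) with hr
  have hmgf : ∀ j, mgf (Y j) μ t ≤ Real.exp (r j) := by
    rintro (i | i)
    · rw [show Y (Sum.inl i) = W i from rfl,
        bernoulli_mgf μ (W i) p t (hWmeas i) (hWval i) (hWp i) hp0]
      have := Real.add_one_le_exp (p * (Real.exp t - 1))
      simpa [hr, add_comm] using this
    · rw [show Y (Sum.inr i) = -(Z i) from rfl, mgf_neg,
        bernoulli_mgf μ (Z i) q (-t) (hZmeas i) (hZval i) (hZq i) hq0]
      have := Real.add_one_le_exp (q * (Real.exp (-t) - 1))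
      simpa [hr, add_comm] using this
  calc ∏ j, mgf (Y j) μ t ≤ ∏ j, Real.exp (r j) := by
        refine Finset.prod_le_prod (fun j _ => mgf_nonneg) fun j _ => hmgf j
    _ = Real.exp (∑ j, r j) := (Real.exp_sum _ _).symm
    _ ≤ Real.exp (-(δ / 2) * (ea - eb)^2 * Real.log n) := by
        apply Real.exp_le_exp.mpr
        apply le_of_eq
        rw [Fintype.sum_sum_type]
        simp only [hr, Sum.elim_inl, Sum.elim_inr, Finset.sum_const, Finset.card_univ,
          Fintype.card_fin, nsmul_eq_mul]
        rw [het, hemt, hpdef, hqdef, hm, ← hea2, ← heb2]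
        field_simp
        ring
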